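/- For each integer n ≥ 0 and parameter α, the higher-order Euler polynomial E_n^{(α)}(x) equals (−1)^n times the determinant of the (n+1)×(n+1) matrix whose first column has entries 1, x, x², ..., x^n, and whose (i,j)-entry for j ≥ 2 is C(i−1, j−2)·β_{i−j+1} if i ≥ j−1 and 0 otherwise, where β_m = Σ_{i=0}^{m} ⟨α⟩_i · S(m,i)/2^i. -/

import Mathlib

open Finset

/-- Stirling numbers of the second kind `S(n,k)`. -/
def stirling : ℕ → ℕ → ℕ
  | 0, 0 => 1
  | 0, _ + 1 => 0
  | _ + 1, 0 => 0
  | n + 1, k + 1 => (k + 1) * stirling n (k + 1) + stirling n k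

/-- The falling factorial `⟨x⟩_i = x (x-1) ⋯ (x-i+1)`, with `⟨x⟩_0 = 1`. -/
def fallingFac (x : ℝ) (i : ℕ) : ℝ := ∏ k ∈ Finset.range i, (x - k)

/-- The function `(e^t - 1)/t`, extended by the value `1` at `t = 0`. -/
noncomputable def expm1Div (t : ℝ) : ℝ := if t = 0 then 1 else (Real.exp t - 1) / t

/-- The higher-order Bernoulli polynomial `B_n^{(α)}(x)`, defined via the generating
function `(t/(eᵗ-1))^α e^{xt} = ∑ B_n^{(α)}(x) tⁿ/n!`, i.e. as the `n`-th derivative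
of `((eᵗ-1)/t)^{-α} e^{xt}` at `t = 0`. -/
noncomputable def higherBernoulli (n : ℕ) (α x : ℝ) : ℝ :=
  iteratedDeriv n (fun t => expm1Div t ^ (-α) * Real.exp (x * t)) 0

/-- The higher-order Euler polynomial `E_n^{(α)}(x)`, defined via the generating
function `(2/(eᵗ+1))^α e^{xt} = ∑ E_n^{(α)}(x) tⁿ/n!`. -/
noncomputable def higherEuler (n : ℕ) (α x : ℝ) : ℝ :=
  iteratedDeriv n (fun t => ((Real.exp t + 1) / 2) ^ (-α) * Real.exp (x * t)) 0

private lemma stirling_eq_zero : ∀ {m k : ℕ}, m < k → stirling m k = 0 := by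
  intro m
  induction m with
  | zero => intro k hk; match k, hk with | k+1, _ => rfl
  | succ m ih =>
    intro k hk
    match k, hk with
    | k+1, hk =>
      show (k + 1) * stirling m (k + 1) + stirling m k = 0
      rw [ih (by omega), ih (by omega)]
      ring

private lemma fallingFac_succ (c : ℝ) (i : ℕ) : fallingFac c (i+1) = fallingFac c i * (c - i) :=
  Finset.prod_range_succ _ i

private lemma hasDerivAt_upow (c t : ℝ) : HasDerivAt (fun t => ((Real.exp t + 1)/2) ^ c)
    (c * ((Real.exp t + 1)/2) ^ (c-1) * (Real.exp t / 2)) t := by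
  have h1 : HasDerivAt (fun t => (Real.exp t + 1)/2) (Real.exp t / 2) t :=
    ((Real.hasDerivAt_exp t).add_const 1).div_const 2
  have h2 := h1.rpow_const (p := c) (Or.inl (by positivity))
  convert h2 using 1; ring

private lemma pow_pred_mul (v : ℝ) (i : ℕ) : (i:ℝ) * v^(i-1) * v = (i:ℝ) * v^i := by
  cases i with
  | zero => simp
  | succ i =>
    rw [Nat.add_sub_cancel, mul_assoc, ← pow_succ]

private lemma iteratedDeriv_upow (c : ℝ) (m : ℕ) :
    iteratedDeriv m (fun t => ((Real.exp t + 1)/2) ^ c) = fun t =>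
      ∑ i ∈ range (m+1), fallingFac c i * (stirling m i : ℝ) *
        ((Real.exp t + 1)/2) ^ (c - i) * (Real.exp t / 2) ^ i := by
  induction m with
  | zero =>
    funext t
    simp [iteratedDeriv_zero, fallingFac, stirling]
  | succ m ih =>
    funext t
    rw [iteratedDeriv_succ, ih]
    have hd : HasDerivAt (fun t => ∑ i ∈ range (m+1), fallingFac c i * (stirling m i : ℝ) *
          ((Real.exp t + 1)/2) ^ (c - i) * (Real.exp t / 2) ^ i)
        (∑ i ∈ range (m+1), (fallingFac c (i+1) * (stirling m i : ℝ) *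
            ((Real.exp t + 1)/2) ^ (c - (i+1)) * (Real.exp t / 2) ^ (i+1)
          + (i : ℝ) * (fallingFac c i * (stirling m i : ℝ) *
            ((Real.exp t + 1)/2) ^ (c - i) * (Real.exp t / 2) ^ i))) t := by
      apply HasDerivAt.fun_sum
      intro i _
      have hu := hasDerivAt_upow (c - i) t
      have hv : HasDerivAt (fun t => (Real.exp t / 2) ^ i)
          ((i : ℝ) * (Real.exp t / 2) ^ (i-1) * (Real.exp t / 2)) t :=
        ((Real.hasDerivAt_exp t).div_const 2).pow i
      have h := (hu.fun_mul hv).const_mul (fallingFac c i * (stirling m i : ℝ))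
      convert h using 1
      · rfl
      · funext y
        ring
      rw [fallingFac_succ, pow_pred_mul]
      rw [show c - (↑i + 1) = c - ↑i - 1 from by ring]
      ring
    rw [hd.deriv]
    -- recombine using the stirling recurrence
    rw [sum_add_distrib]
    have e1 : ∑ i ∈ range (m+1), (i : ℝ) * (fallingFac c i * (stirling m i : ℝ) *
          ((Real.exp t + 1)/2) ^ (c - i) * (Real.exp t / 2) ^ i)
        = ∑ i ∈ range (m+1), ((i+1 : ℕ) : ℝ) * (fallingFac c (i+1) * (stirling m (i+1) : ℝ) *
          ((Real.exp t + 1)/2) ^ (c - (i+1:ℕ)) * (Real.exp t / 2) ^ (i+1)) := by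
      rw [sum_range_succ' (fun i => (i : ℝ) * (fallingFac c i * (stirling m i : ℝ) *
          ((Real.exp t + 1)/2) ^ (c - i) * (Real.exp t / 2) ^ i)) m,
        sum_range_succ (fun i => ((i+1 : ℕ) : ℝ) * (fallingFac c (i+1) * (stirling m (i+1) : ℝ) *
          ((Real.exp t + 1)/2) ^ (c - (i+1:ℕ)) * (Real.exp t / 2) ^ (i+1))) m]
      rw [stirling_eq_zero (show m < m + 1 by omega)]
      push_cast
      ring
    rw [e1, ← sum_add_distrib]
    rw [sum_range_succ' (fun i => fallingFac c i * (stirling (m+1) i : ℝ) *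
        ((Real.exp t + 1)/2) ^ (c - i) * (Real.exp t / 2) ^ i) (m+1)]
    have h0 : (stirling (m+1) 0 : ℝ) = 0 := by
      show ((0 : ℕ) : ℝ) = 0
      simp
    rw [h0]
    simp only [mul_zero, zero_mul, add_zero]
    apply sum_congr rfl
    intro i _
    have hst : stirling (m+1) (i+1) = (i+1) * stirling m (i+1) + stirling m i := rfl
    rw [hst]
    push_cast
    ring

private lemma smooth_diff {f : ℝ → ℝ} (hf : ContDiff ℝ (⊤:ℕ∞) f) (k : ℕ) :
    Differentiable ℝ (iteratedDeriv k f) :=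
  hf.differentiable_iteratedDeriv k (by exact_mod_cast WithTop.coe_lt_top _)

private lemma hasDerivAt_iteratedDeriv {f : ℝ → ℝ} (hf : ContDiff ℝ (⊤:ℕ∞) f) (k : ℕ) (t : ℝ) :
    HasDerivAt (iteratedDeriv k f) (iteratedDeriv (k+1) f t) t := by
  rw [iteratedDeriv_succ]
  exact ((smooth_diff hf k) t).hasDerivAt

private lemma leibniz {f g : ℝ → ℝ} (hf : ContDiff ℝ (⊤:ℕ∞) f) (hg : ContDiff ℝ (⊤:ℕ∞) g)
    (n : ℕ) (t : ℝ) :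
    iteratedDeriv n (fun s => f s * g s) t =
      ∑ k ∈ range (n+1), (n.choose k : ℝ) * iteratedDeriv k f t * iteratedDeriv (n-k) g t := by
  induction n generalizing t with
  | zero => simp [iteratedDeriv_zero]
  | succ n ih =>
    rw [iteratedDeriv_succ]
    have hfun : iteratedDeriv n (fun s => f s * g s) = fun t =>
        ∑ k ∈ range (n+1), (n.choose k : ℝ) * iteratedDeriv k f t * iteratedDeriv (n-k) g t :=
      funext ih
    rw [hfun]
    have hd : ∀ s : ℝ, HasDerivAt
        (fun t => ∑ k ∈ range (n+1), (n.choose k : ℝ) * iteratedDeriv k f t * iteratedDeriv (n-k) g t)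
        (∑ k ∈ range (n+1), (n.choose k : ℝ) *
          (iteratedDeriv (k+1) f s * iteratedDeriv (n-k) g s
            + iteratedDeriv k f s * iteratedDeriv (n-k+1) g s)) s := by
      intro s
      apply HasDerivAt.fun_sum
      intro k _
      have h1 := (hasDerivAt_iteratedDeriv hf k s).fun_mul (hasDerivAt_iteratedDeriv hg (n-k) s)
      have h2 := h1.const_mul ((n.choose k : ℝ))
      convert h2 using 2
      · rfl
      ring
    rw [(hd t).deriv]
    -- now the Pascal recombination
    have key : ∀ (F G : ℕ → ℝ),
        ∑ k ∈ range (n+1), (n.choose k : ℝ) * (F (k+1) * G (n-k) + F k * G (n-k+1)) =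
        ∑ k ∈ range (n+2), ((n+1).choose k : ℝ) * F k * G (n+1-k) := by
      intro F G
      have e1 : ∀ k ∈ range (n+1), (n.choose k : ℝ) * (F (k+1) * G (n-k) + F k * G (n-k+1))
          = (n.choose k : ℝ) * F (k+1) * G (n-k) + (n.choose k : ℝ) * F k * G (n+1-k) := by
        intro k hk
        rw [mem_range] at hk
        have : n - k + 1 = n + 1 - k := by omega
        rw [this]; ring
      rw [sum_congr rfl e1, sum_add_distrib]
      rw [sum_range_succ' (fun k => ((n+1).choose k : ℝ) * F k * G (n+1-k)) (n+1)]
      have e2 : ∀ k ∈ range (n+1), ((n+1).choose (k+1) : ℝ) * F (k+1) * G (n+1-(k+1))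
          = (n.choose k : ℝ) * F (k+1) * G (n-k) + (n.choose (k+1) : ℝ) * F (k+1) * G (n-k) := by
        intro k hk
        have : (n+1).choose (k+1) = n.choose k + n.choose (k+1) := Nat.choose_succ_succ' n k |>.symm ▸ rfl
        rw [Nat.choose_succ_succ]
        have : n + 1 - (k+1) = n - k := by omega
        rw [this]
        push_cast
        ring
      rw [sum_congr rfl e2, sum_add_distrib]
      have e3 : ∑ k ∈ range (n+1), (n.choose k : ℝ) * F k * G (n+1-k)
          = ((n+1).choose 0 : ℝ) * F 0 * G (n+1-0) + ∑ k ∈ range (n+1), (n.choose (k+1) : ℝ) * F (k+1) * G (n-k) := by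
        rw [sum_range_succ' (fun k => (n.choose k : ℝ) * F k * G (n+1-k)) n,
            sum_range_succ (fun k => (n.choose (k+1) : ℝ) * F (k+1) * G (n-k)) n]
        have h0 : n.choose (n+1) = 0 := Nat.choose_eq_zero_of_lt (by omega)
        have hc : ∀ k ∈ range n, (n.choose (k+1) : ℝ) * F (k+1) * G (n+1-(k+1))
            = (n.choose (k+1) : ℝ) * F (k+1) * G (n-k) := by
          intro k hk
          rw [mem_range] at hk
          congr 2
          omega
        rw [sum_congr rfl hc, h0]
        simp only [Nat.choose_zero_right, Nat.cast_one, Nat.cast_zero]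
        ring
      rw [e3]; ring
    exact key (fun k => iteratedDeriv k f t) (fun k => iteratedDeriv k g t)


private lemma contDiff_upow (c : ℝ) : ContDiff ℝ (⊤:ℕ∞) (fun t => ((Real.exp t + 1)/2) ^ c) := by
  apply ContDiff.rpow_const_of_ne
  · exact (Real.contDiff_exp.add contDiff_const).div_const 2
  · intro t; positivity

/-- `β` coefficients. -/
noncomputable def bet (α : ℝ) (m : ℕ) : ℝ :=
  ∑ i' ∈ Finset.range (m + 1), fallingFac α i' * (stirling m i' : ℝ) / 2 ^ i'

private lemma bet_eq (α : ℝ) (m : ℕ) :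
    iteratedDeriv m (fun t => ((Real.exp t + 1)/2) ^ α) 0 = bet α m := by
  rw [iteratedDeriv_upow]
  unfold bet
  apply sum_congr rfl
  intro i _
  rw [show ((Real.exp 0 + 1)/2 : ℝ) = 1 by norm_num [Real.exp_zero]]
  rw [Real.one_rpow, show ((Real.exp 0 / 2 : ℝ)) = 1/2 by norm_num [Real.exp_zero]]
  rw [div_pow, one_pow]
  ring

private lemma bet_zero (α : ℝ) : bet α 0 = 1 := by
  unfold bet
  rw [Finset.sum_range_one]
  show fallingFac α 0 * ((1:ℕ):ℝ) / 2 ^ 0 = 1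
  simp [fallingFac]

private lemma iteratedDeriv_exp_mul (x : ℝ) (n : ℕ) :
    iteratedDeriv n (fun t => Real.exp (x * t)) = fun t => x ^ n * Real.exp (x * t) := by
  induction n with
  | zero => funext t; simp [iteratedDeriv_zero]
  | succ n ih =>
    funext t
    rw [iteratedDeriv_succ, ih]
    have h := (((hasDerivAt_id t).const_mul x).exp).const_mul (x ^ n)
    simp only [id_eq, mul_one] at h
    rw [h.deriv]
    ring

private lemma contDiff_euler (α x : ℝ) :
    ContDiff ℝ (⊤:ℕ∞) (fun t => ((Real.exp t + 1) / 2) ^ (-α) * Real.exp (x * t)) :=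
  (contDiff_upow (-α)).mul (Real.contDiff_exp.comp (contDiff_const.mul contDiff_id))

/-- The fundamental recurrence `∑ C(n,k) E_k β_{n-k} = x^n`. -/
private lemma euler_recurrence (n : ℕ) (α x : ℝ) :
    ∑ k ∈ range (n+1), (n.choose k : ℝ) * higherEuler k α x * bet α (n - k) = x ^ n := by
  have hfg : (fun s => (((Real.exp s + 1) / 2) ^ (-α) * Real.exp (x * s)) *
      ((Real.exp s + 1)/2) ^ α) = fun t => Real.exp (x * t) := by
    funext t
    have hu0 : ((Real.exp t + 1)/2) ^ (-α) * ((Real.exp t + 1)/2) ^ α = 1 := by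
      rw [← Real.rpow_add (by positivity), neg_add_cancel, Real.rpow_zero]
    linear_combination Real.exp (x * t) * hu0
  have h := leibniz (contDiff_euler α x) (contDiff_upow α) n 0
  rw [hfg, iteratedDeriv_exp_mul] at h
  simp only [mul_zero, Real.exp_zero, mul_one] at h
  rw [h]
  apply sum_congr rfl
  intro k _
  rw [bet_eq]
  rfl

/-- The determinantal expression for higher-order Euler polynomials. -/
theorem higherEuler_det (n : ℕ) (α x : ℝ) :
    higherEuler n α x =
      (-1 : ℝ) ^ n *
        (Matrix.of fun i j : Fin (n + 1) =>
          if (j : ℕ) = 0 then x ^ (i : ℕ)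
          else if (j : ℕ) ≤ (i : ℕ) + 1 then
            ((i : ℕ).choose ((j : ℕ) - 1) : ℝ) *
              (let m := (i : ℕ) + 1 - (j : ℕ)
               ∑ i' ∈ Finset.range (m + 1), fallingFac α i' * (stirling m i' : ℝ) / 2 ^ i')
          else 0).det := by
  classical
  set D : Matrix (Fin (n+1)) (Fin (n+1)) ℝ :=
    Matrix.of fun i j : Fin (n+1) =>
      if (j : ℕ) ≤ (i : ℕ) then (((i:ℕ)).choose (j:ℕ) : ℝ) * bet α ((i:ℕ) - (j:ℕ)) else 0
    with hD
  have hDtri : D.BlockTriangular OrderDual.toDual := by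
    intro i j hij
    have : ¬ ((j : ℕ) ≤ (i : ℕ)) := by
      simp only [OrderDual.toDual_lt_toDual] at hij
      exact not_le.mpr (Fin.lt_iff_val_lt_val.mp hij)
    show (Matrix.of _ : Matrix (Fin (n+1)) (Fin (n+1)) ℝ) i j = 0
    rw [Matrix.of_apply]
    exact if_neg this
  have hDdet : D.det = 1 := by
    rw [Matrix.det_of_lowerTriangular D hDtri]
    have : ∀ i : Fin (n+1), D i i = 1 := by
      intro i
      simp [hD, bet_zero]
    rw [Finset.prod_congr rfl (fun i _ => this i)]
    simp
  set E : Fin (n+1) → ℝ := fun j => higherEuler (j : ℕ) α x with hE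
  set X : Fin (n+1) → ℝ := fun i => x ^ (i : ℕ) with hX
  have hBX : (fun k : Fin (n+1) => ∑ i : Fin (n+1), E i • D k i) = X := by
    funext i
    have h1 : ∑ j : Fin (n+1), E j • D i j
        = ∑ j ∈ range (n+1), higherEuler j α x •
            (if j ≤ (i : ℕ) then (((i:ℕ)).choose j : ℝ) * bet α ((i:ℕ) - j) else 0) := by
      rw [← Fin.sum_univ_eq_sum_range (fun j =>
        higherEuler j α x • (if j ≤ (i : ℕ) then (((i:ℕ)).choose j : ℝ) * bet α ((i:ℕ) - j) else 0))]
      rfl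
    rw [h1]
    have h2 : ∑ j ∈ range (n+1), higherEuler j α x •
          (if j ≤ (i : ℕ) then (((i:ℕ)).choose j : ℝ) * bet α ((i:ℕ) - j) else 0)
        = ∑ j ∈ range ((i:ℕ)+1), ((i:ℕ).choose j : ℝ) * higherEuler j α x * bet α ((i:ℕ) - j) := by
      rw [← Finset.sum_subset (Finset.range_subset_range.2 (show (i:ℕ)+1 ≤ n+1 by omega))]
      · apply sum_congr rfl
        intro j hj
        rw [mem_range] at hj
        rw [if_pos (by omega), smul_eq_mul]
        ring
      · intro j _ hj
        rw [mem_range] at hj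
        rw [if_neg (by omega), smul_zero]
    rw [h2, euler_recurrence]
  have hcramer := Matrix.det_updateCol_sum D (Fin.last n) E
  rw [hBX, hDdet, smul_eq_mul, mul_one] at hcramer
  have hElast : E (Fin.last n) = higherEuler n α x := by
    simp [hE, Fin.val_last]
  set σ : Equiv.Perm (Fin (n+1)) := (finRotate (n+1))⁻¹ with hσ
  have hσapp : ∀ j : Fin (n+1), σ j = j - 1 := by
    intro j
    rw [hσ]
    rw [Equiv.Perm.inv_def, Equiv.symm_apply_eq, finRotate_succ_apply, sub_add_cancel]
  have hM : (Matrix.of fun i j : Fin (n + 1) =>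
          if (j : ℕ) = 0 then x ^ (i : ℕ)
          else if (j : ℕ) ≤ (i : ℕ) + 1 then
            ((i : ℕ).choose ((j : ℕ) - 1) : ℝ) *
              (let m := (i : ℕ) + 1 - (j : ℕ)
               ∑ i' ∈ Finset.range (m + 1), fallingFac α i' * (stirling m i' : ℝ) / 2 ^ i')
          else 0)
      = (D.updateCol (Fin.last n) X).submatrix id σ := by
    ext i j
    rw [Matrix.submatrix_apply, id_eq, hσapp j]
    by_cases hj : j = 0
    · subst hj
      have hlast : (0 : Fin (n+1)) - 1 = Fin.last n := by
        apply Fin.ext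
        rw [Fin.coe_sub_one, if_pos rfl, Fin.val_last]
      rw [hlast, Matrix.updateCol_apply, if_pos rfl]
      simp [hX]
    · have hj0 : (j : ℕ) ≠ 0 := fun h => hj (Fin.ext h)
      have hcoe : ((j - 1 : Fin (n+1)) : ℕ) = (j : ℕ) - 1 := by
        rw [Fin.coe_sub_one, if_neg hj]
      have hne : j - 1 ≠ Fin.last n := by
        intro h
        have := congrArg Fin.val h
        rw [hcoe, Fin.val_last] at this
        have hjn : (j : ℕ) ≤ n := Nat.lt_succ_iff.mp j.isLt
        omega
      rw [Matrix.updateCol_apply, if_neg hne]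
      show (if (j : ℕ) = 0 then x ^ (i : ℕ)
          else if (j : ℕ) ≤ (i : ℕ) + 1 then
            ((i : ℕ).choose ((j : ℕ) - 1) : ℝ) * bet α ((i : ℕ) + 1 - (j : ℕ))
          else 0)
        = if ((j - 1 : Fin (n+1)) : ℕ) ≤ (i : ℕ) then
            (((i:ℕ)).choose ((j - 1 : Fin (n+1)) : ℕ) : ℝ) * bet α ((i:ℕ) - ((j - 1 : Fin (n+1)) : ℕ)) else 0
      rw [if_neg hj0, hcoe]
      by_cases hle : (j : ℕ) ≤ (i : ℕ) + 1
      · rw [if_pos hle, if_pos (by omega)]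
        congr 1
        congr 1
        omega
      · rw [if_neg hle, if_neg (by omega)]
  rw [hM, Matrix.det_permute']
  have hsign : (Equiv.Perm.sign σ : ℝ) = (-1) ^ n := by
    rw [hσ, Equiv.Perm.sign_inv, sign_finRotate]
    push_cast
    ring
  rw [hsign, hcramer, hElast]
  rw [← mul_assoc, ← mul_pow]
  norm_num
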